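/- arXiv:1502.03049 — 2 statements merged into one kernel-verified Lean document; each statement's English description precedes it below -/
import Mathlib

section
/- Let B be an n×n symmetric matrix with nonnegative entries, let 𝒞 be a subset of [n]×[n], and let ε ∈ (0,1). Let B_𝒞 denote the n×n matrix that agrees with B on 𝒞 and is zero outside 𝒞. Suppose that for every i ∈ [n], the i-th row sum of B_𝒞 is at most ε times the i-th row sum of B, i.e. Σ_{j : (i,j) ∈ 𝒞} B_ij ≤ ε·Σ_{j=1}^n B_ij. Then ‖(L(B))_𝒞‖ ≤ √ε, where (L(B))_𝒞 denotes the n×n matrix that agrees with L(B) on 𝒞 and is zero outside 𝒞. -/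
open MeasureTheory ProbabilityTheory

noncomputable def opNorm {m k : Type*} [Fintype m] [Fintype k] [DecidableEq k]
    (B : Matrix m k ℝ) : ℝ :=
  ‖(Matrix.toEuclideanLin B).toContinuousLinearMap‖

noncomputable def normInfOne {m k : Type*} [Fintype m] [Fintype k] (B : Matrix m k ℝ) : ℝ :=
  ⨆ p : (m → ({-1, 1} : Set ℝ)) × (k → ({-1, 1} : Set ℝ)),
    ∑ i, ∑ j, (p.1 i : ℝ) * B i j * (p.2 j : ℝ)

def submatrixSet {n k : ℕ} (B : Matrix (Fin n) (Fin k) ℝ)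
    (I : Finset (Fin n)) (J : Finset (Fin k)) : Matrix I J ℝ :=
  fun i j => B i.1 j.1

noncomputable def avgOp {n : ℕ} (B : Matrix (Fin n) (Fin n) ℝ) : Matrix (Fin n) (Fin n) ℝ :=
  fun i j => B i j / (Real.sqrt (∑ l, B i l) * Real.sqrt (∑ l, B l j))

noncomputable def lap {n : ℕ} (B : Matrix (Fin n) (Fin n) ℝ) : Matrix (Fin n) (Fin n) ℝ :=
  fun i j => (if i = j ∧ 0 < ∑ l, B i l then (1 : ℝ) else 0) - avgOp B i j

def reg {n : ℕ} (B : Matrix (Fin n) (Fin n) ℝ) (τ : ℝ) : Matrix (Fin n) (Fin n) ℝ :=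
  fun i j => B i j + τ

def maskMatrix {n : ℕ} (M : Matrix (Fin n) (Fin n) ℝ) (S : Finset (Fin n × Fin n)) :
    Matrix (Fin n) (Fin n) ℝ :=
  fun i j => if (i, j) ∈ S then M i j else 0

open Classical in
noncomputable def secondSmallestEigenvalue {n : ℕ} (M : Matrix (Fin n) (Fin n) ℝ) : ℝ :=
  if hM : M.IsHermitian then
    (Multiset.sort (Finset.univ.val.map hM.eigenvalues) (· ≤ ·)).getD 1 0
  else 0

/-- Restriction of the Laplacian (Lemma 8.1). -/
theorem stmt17 (n : ℕ) (B : Matrix (Fin n) (Fin n) ℝ) (S : Finset (Fin n × Fin n)) (ε : ℝ)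
    (hsym : ∀ i j, B i j = B j i)
    (hpos : ∀ i j, 0 ≤ B i j)
    (hε0 : 0 < ε) (hε1 : ε < 1)
    (hrow : ∀ i, (∑ j, maskMatrix B S i j) ≤ ε * ∑ j, B i j) :
    opNorm (maskMatrix (avgOp B) S) ≤ Real.sqrt ε := by
  classical
  set d : Fin n → ℝ := fun i => ∑ l, B i l with hd_def
  set s : Matrix (Fin n) (Fin n) ℝ := maskMatrix B S with hs_def
  have hd : ∀ i, 0 ≤ d i := fun i => Finset.sum_nonneg fun l _ => hpos i l
  have hs_nonneg : ∀ i j, 0 ≤ s i j := by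
    intro i j; simp only [hs_def, maskMatrix]
    split
    · exact hpos i j
    · exact le_rfl
  have hs_le : ∀ i j, s i j ≤ B i j := by
    intro i j; simp only [hs_def, maskMatrix]
    split
    · exact le_rfl
    · exact hpos i j
  have hM : ∀ i j, maskMatrix (avgOp B) S i j = s i j / (Real.sqrt (d i) * Real.sqrt (d j)) := by
    intro i j
    simp only [maskMatrix, avgOp, hs_def, hd_def]
    split
    · rw [show (∑ l, B l j) = ∑ l, B j l from Finset.sum_congr rfl fun l _ => hsym l j]
    · simp
  have hrow0 : ∀ i j, d i = 0 → B i j = 0 := fun i j h =>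
    (Finset.sum_eq_zero_iff_of_nonneg (fun l _ => hpos i l)).mp h j (Finset.mem_univ j)
  rw [opNorm]
  apply ContinuousLinearMap.opNorm_le_bound _ (Real.sqrt_nonneg ε)
  intro x
  rw [LinearMap.coe_toContinuousLinearMap']
  set M := maskMatrix (avgOp B) S with hM_def
  have happ : ∀ i, (Matrix.toEuclideanLin M x) i = ∑ j, M i j * x j := fun i => rfl
  rw [EuclideanSpace.norm_eq, EuclideanSpace.norm_eq]
  have key : ∑ i, ‖(Matrix.toEuclideanLin M x) i‖ ^ 2 ≤ ε * ∑ i, ‖x i‖ ^ 2 := by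
    have step1 : ∀ i, ‖(Matrix.toEuclideanLin M x) i‖ ^ 2
        ≤ ε * ∑ j, s i j * (x j) ^ 2 / d j := by
      intro i
      rw [happ, Real.norm_eq_abs, sq_abs]
      have hrw : ∀ j, M i j * x j
          = (Real.sqrt (s i j) / Real.sqrt (d i))
            * (Real.sqrt (s i j) * x j / Real.sqrt (d j)) := by
        intro j
        rw [hM i j, div_mul_div_comm]
        rw [show Real.sqrt (s i j) * (Real.sqrt (s i j) * x j)
            = Real.sqrt (s i j) * Real.sqrt (s i j) * x j by ring,
          Real.mul_self_sqrt (hs_nonneg i j)]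
        ring
      have hu : (∑ j, (Real.sqrt (s i j) / Real.sqrt (d i)) ^ 2) ≤ ε := by
        have : ∀ j, (Real.sqrt (s i j) / Real.sqrt (d i)) ^ 2 = s i j / d i := by
          intro j
          rw [div_pow, Real.sq_sqrt (hs_nonneg i j), Real.sq_sqrt (hd i)]
        rw [Finset.sum_congr rfl fun j _ => this j, ← Finset.sum_div]
        by_cases h0 : d i = 0
        · have : ∀ j ∈ Finset.univ, s i j = (0:ℝ) := fun j _ =>
            le_antisymm ((hs_le i j).trans_eq (hrow0 i j h0)) (hs_nonneg i j)
          rw [Finset.sum_congr rfl this]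
          simp [hε0.le]
        · have hdi : 0 < d i := lt_of_le_of_ne (hd i) (Ne.symm h0)
          rw [div_le_iff₀ hdi]
          exact hrow i
      have hv : ∀ j, (Real.sqrt (s i j) * x j / Real.sqrt (d j)) ^ 2
          = s i j * (x j) ^ 2 / d j := by
        intro j
        rw [div_pow, mul_pow, Real.sq_sqrt (hs_nonneg i j), Real.sq_sqrt (hd j)]
      have hvnn : 0 ≤ ∑ j, s i j * (x j) ^ 2 / d j := by
        apply Finset.sum_nonneg
        intro j _
        exact div_nonneg (mul_nonneg (hs_nonneg i j) (sq_nonneg _)) (hd j)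
      calc (∑ j, M i j * x j) ^ 2
          = (∑ j, (Real.sqrt (s i j) / Real.sqrt (d i))
              * (Real.sqrt (s i j) * x j / Real.sqrt (d j))) ^ 2 := by
            rw [Finset.sum_congr rfl fun j _ => hrw j]
        _ ≤ (∑ j, (Real.sqrt (s i j) / Real.sqrt (d i)) ^ 2)
              * (∑ j, (Real.sqrt (s i j) * x j / Real.sqrt (d j)) ^ 2) :=
            Finset.sum_mul_sq_le_sq_mul_sq _ _ _
        _ ≤ ε * ∑ j, s i j * (x j) ^ 2 / d j := by
            rw [Finset.sum_congr rfl fun j _ => hv j]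
            exact mul_le_mul_of_nonneg_right hu hvnn
    calc ∑ i, ‖(Matrix.toEuclideanLin M x) i‖ ^ 2
        ≤ ∑ i, ε * ∑ j, s i j * (x j) ^ 2 / d j :=
          Finset.sum_le_sum fun i _ => step1 i
      _ = ε * ∑ j, (∑ i, s i j) * (x j) ^ 2 / d j := by
          rw [← Finset.mul_sum, Finset.sum_comm]
          congr 1
          refine Finset.sum_congr rfl fun j _ => ?_
          rw [← Finset.sum_div, ← Finset.sum_mul]
      _ ≤ ε * ∑ j, ‖x j‖ ^ 2 := by
          apply mul_le_mul_of_nonneg_left _ hε0.le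
          apply Finset.sum_le_sum
          intro j _
          rw [Real.norm_eq_abs, sq_abs]
          by_cases h0 : d j = 0
          · have hz : ∀ i ∈ Finset.univ, s i j = (0:ℝ) := by
              intro i _
              refine le_antisymm ?_ (hs_nonneg i j)
              calc s i j ≤ B i j := hs_le i j
                _ = B j i := (hsym i j).symm ▸ rfl
                _ = 0 := hrow0 j i h0
            rw [Finset.sum_congr rfl hz]
            simp [sq_nonneg]
          · have hdj : 0 < d j := lt_of_le_of_ne (hd j) (Ne.symm h0)
            rw [div_le_iff₀ hdj]
            have hcol : (∑ i, s i j) ≤ d j := by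
              have : d j = ∑ i, B i j := by
                simp only [hd_def]
                exact Finset.sum_congr rfl fun i _ => hsym j i
              rw [this]
              exact Finset.sum_le_sum fun i _ => hs_le i j
            calc (∑ i, s i j) * x j ^ 2 ≤ d j * x j ^ 2 :=
                  mul_le_mul_of_nonneg_right hcol (sq_nonneg _)
              _ = x j ^ 2 * d j := by ring
  calc Real.sqrt (∑ i, ‖(Matrix.toEuclideanLin M x) i‖ ^ 2)
      ≤ Real.sqrt (ε * ∑ i, ‖x i‖ ^ 2) := Real.sqrt_le_sqrt key
    _ = Real.sqrt ε * Real.sqrt (∑ i, ‖x i‖ ^ 2) := Real.sqrt_mul hε0.le _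
end

section
/- Let Ā = (p_ij) be an n×n symmetric matrix with entries in [0,1], and let d ≥ e satisfy max_{i,j} n·p_ij ≤ d. Then for every τ > 0 and every I, J ⊆ [n] with min(|I|,|J|) ≤ n/d, the sub-matrix of the averaging operator of the regularized matrix Ā_τ = Ā + τ·1 1ᵀ satisfies ‖L(Ā_τ)_{I×J}‖ ≤ 2/√d + 2/√(n·τ). -/
open MeasureTheory ProbabilityTheory

lemma opNorm_le_sqrt_sum_sq {m k : Type*} [Fintype m] [Fintype k] [DecidableEq k]
    (B : Matrix m k ℝ) :
    opNorm B ≤ Real.sqrt (∑ i, ∑ j, (B i j)^2) := by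
  apply ContinuousLinearMap.opNorm_le_bound _ (Real.sqrt_nonneg _)
  intro x
  have hx : ∀ j, x j = (WithLp.equiv 2 (k → ℝ)) x j := fun _ => rfl
  have hy : ∀ i, ((Matrix.toEuclideanLin B).toContinuousLinearMap x) i
      = ∑ j, B i j * x j := by
    intro i
    rfl
  rw [EuclideanSpace.norm_eq, EuclideanSpace.norm_eq]
  have hxs : ∀ j, ‖x j‖^2 = (x j)^2 := fun j => by simp [sq_abs, Real.norm_eq_abs]
  have key : ∑ i, ‖((Matrix.toEuclideanLin B).toContinuousLinearMap x) i‖^2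
      ≤ (∑ i, ∑ j, (B i j)^2) * ∑ j, (x j)^2 := by
    rw [Finset.sum_mul]
    apply Finset.sum_le_sum
    intro i _
    rw [hy i, Real.norm_eq_abs, sq_abs]
    exact Finset.sum_mul_sq_le_sq_mul_sq _ _ _
  calc Real.sqrt (∑ i, ‖((Matrix.toEuclideanLin B).toContinuousLinearMap x) i‖^2)
      ≤ Real.sqrt ((∑ i, ∑ j, (B i j)^2) * ∑ j, (x j)^2) := Real.sqrt_le_sqrt key
    _ = Real.sqrt (∑ i, ∑ j, (B i j)^2) * Real.sqrt (∑ j, (x j)^2) := by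
        rw [Real.sqrt_mul (by positivity)]
    _ = Real.sqrt (∑ i, ∑ j, (B i j)^2) * Real.sqrt (∑ j, ‖x j‖^2) := by
        simp_rw [hxs]

lemma key_sum {n : ℕ} (hn : 0 < (n:ℝ)) (Abar : Matrix (Fin n) (Fin n) ℝ) (d τ : ℝ)
    (hd : 0 < d) (hτ : 0 < τ)
    (h0 : ∀ i j, 0 ≤ Abar i j)
    (hmax : ∀ i j, (n : ℝ) * Abar i j ≤ d)
    (hsym : ∀ i j, Abar i j = Abar j i)
    (I J : Finset (Fin n)) (hJ : (J.card : ℝ) ≤ n / d) :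
    ∑ i ∈ I, ∑ j ∈ J, ((Abar i j + τ) /
        (Real.sqrt (∑ l, (Abar i l + τ)) * Real.sqrt (∑ l, (Abar l j + τ))))^2
      ≤ 2/(n*τ) + 2/d := by
  set D : Fin n → ℝ := fun i => (∑ l, Abar i l) + n * τ with hD
  have hrow : ∀ i, ∑ l, (Abar i l + τ) = D i := by
    intro i; simp [hD, Finset.sum_add_distrib, mul_comm]
  have hcol : ∀ j, ∑ l, (Abar l j + τ) = D j := by
    intro j
    rw [← hrow j]
    exact Finset.sum_congr rfl fun l _ => by rw [hsym]
  have hnτ : 0 < (n:ℝ) * τ := by positivity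
  have hDge : ∀ i, n * τ ≤ D i := by
    intro i
    have : 0 ≤ ∑ l, Abar i l := Finset.sum_nonneg fun l _ => h0 i l
    simp only [hD]; linarith
  have hDpos : ∀ i, 0 < D i := fun i => lt_of_lt_of_le hnτ (hDge i)
  have hcolsum : ∀ j, ∑ i ∈ I, Abar i j ≤ D j := by
    intro j
    have h1 : ∑ i ∈ I, Abar i j ≤ ∑ i, Abar i j :=
      Finset.sum_le_sum_of_subset_of_nonneg (Finset.subset_univ I) (fun i _ _ => h0 i j)
    have h2 : ∑ i, Abar i j = ∑ i, Abar j i := Finset.sum_congr rfl fun i _ => by rw [hsym]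
    calc ∑ i ∈ I, Abar i j ≤ ∑ i, Abar j i := by rw [← h2]; exact h1
      _ ≤ D j := by simp only [hD]; linarith [hnτ.le]
  -- pointwise bound
  have point : ∀ i ∈ I, ∀ j ∈ J, ((Abar i j + τ) /
      (Real.sqrt (∑ l, (Abar i l + τ)) * Real.sqrt (∑ l, (Abar l j + τ))))^2
      ≤ 2 * ((d/n) * Abar i j) / ((n*τ) * D j) + 2/(n:ℝ)^2 := by
    intro i _ j _
    rw [hrow, hcol]
    have hDi := hDpos i
    have hDj := hDpos j
    have hsq : (Real.sqrt (D i) * Real.sqrt (D j))^2 = D i * D j := by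
      rw [mul_pow, Real.sq_sqrt hDi.le, Real.sq_sqrt hDj.le]
    rw [div_pow, hsq]
    have hA := h0 i j
    have hA2 : Abar i j ^ 2 ≤ (d/n) * Abar i j := by
      have h' : Abar i j ≤ d / n := by rw [le_div_iff₀ hn]; linarith [hmax i j]
      nlinarith
    have e1 : (Abar i j + τ)^2 ≤ 2 * Abar i j ^2 + 2 * τ^2 := by nlinarith [sq_nonneg (Abar i j - τ)]
    have h1 : (Abar i j + τ)^2 / (D i * D j)
        ≤ (2 * Abar i j ^2 + 2 * τ^2) / (D i * D j) := by gcongr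
    have h2 : 2 * Abar i j ^2 / (D i * D j) ≤ 2 * ((d/n) * Abar i j) / ((n*τ) * D j) := by
      apply div_le_div₀ (by positivity) (by linarith) (by positivity)
      exact mul_le_mul_of_nonneg_right (hDge i) hDj.le
    have h3 : 2 * τ^2 / (D i * D j) ≤ 2/(n:ℝ)^2 := by
      have e2 : 2 * τ^2 / ((n*τ) * (n*τ)) = 2/(n:ℝ)^2 := by
        field_simp
      rw [← e2]
      apply div_le_div₀ (by positivity) le_rfl (by positivity)
      exact mul_le_mul (hDge i) (hDge j) hnτ.le (hDpos i).le
    have hadd : (2 * Abar i j ^2 + 2 * τ^2) / (D i * D j)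
        = 2 * Abar i j ^2 / (D i * D j) + 2 * τ^2 / (D i * D j) := add_div _ _ _
    linarith [hadd ▸ h1]
  have split : ∑ i ∈ I, ∑ j ∈ J,
        (2 * ((d/n) * Abar i j) / ((n*τ) * D j) + 2/(n:ℝ)^2)
      = (∑ i ∈ I, ∑ j ∈ J, 2 * ((d/n) * Abar i j) / ((n*τ) * D j))
        + (I.card : ℝ) * J.card * (2/(n:ℝ)^2) := by
    simp [Finset.sum_add_distrib, Finset.sum_const, nsmul_eq_mul]
    ring
  have piece1 : ∑ i ∈ I, ∑ j ∈ J, 2 * ((d/n) * Abar i j) / ((n*τ) * D j) ≤ 2/(n*τ) := by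
    rw [Finset.sum_comm]
    have hb : ∀ j ∈ J, ∑ i ∈ I, 2 * ((d/n) * Abar i j) / ((n*τ) * D j)
        ≤ 2*(d/n)/(n*τ) := by
      intro j _
      have hDj := hDpos j
      have e3 : ∑ i ∈ I, 2 * ((d/n) * Abar i j) / ((n*τ) * D j)
          = (2*(d/n)/((n*τ) * D j)) * ∑ i ∈ I, Abar i j := by
        rw [Finset.mul_sum]; exact Finset.sum_congr rfl fun i _ => by ring
      rw [e3]
      have hcpos : (0:ℝ) ≤ 2*(d/n)/((n*τ) * D j) := by positivity
      calc (2*(d/n)/((n*τ) * D j)) * ∑ i ∈ I, Abar i j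
          ≤ (2*(d/n)/((n*τ) * D j)) * D j :=
            mul_le_mul_of_nonneg_left (hcolsum j) hcpos
        _ = 2*(d/n)/(n*τ) := by
            field_simp
    calc ∑ j ∈ J, ∑ i ∈ I, 2 * ((d/n) * Abar i j) / ((n*τ) * D j)
        ≤ ∑ _j ∈ J, 2*(d/n)/(n*τ) := Finset.sum_le_sum hb
      _ = (J.card : ℝ) * (2*(d/n)/(n*τ)) := by rw [Finset.sum_const, nsmul_eq_mul]
      _ ≤ (n/d) * (2*(d/n)/(n*τ)) := mul_le_mul_of_nonneg_right hJ (by positivity)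
      _ = 2/(n*τ) := by field_simp
  have piece2 : (I.card : ℝ) * J.card * (2/(n:ℝ)^2) ≤ 2/d := by
    have hI : (I.card:ℝ) ≤ n := by
      have := Finset.card_le_univ I
      simp only [Finset.card_univ, Fintype.card_fin] at this
      exact_mod_cast this
    have hJ0 : (0:ℝ) ≤ J.card := Nat.cast_nonneg _
    calc (I.card : ℝ) * J.card * (2/(n:ℝ)^2)
        ≤ (n:ℝ) * (n/d) * (2/(n:ℝ)^2) := by
          apply mul_le_mul_of_nonneg_right _ (by positivity)
          exact mul_le_mul hI hJ hJ0 hn.le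
      _ = 2/d := by field_simp
  calc ∑ i ∈ I, ∑ j ∈ J, ((Abar i j + τ) /
        (Real.sqrt (∑ l, (Abar i l + τ)) * Real.sqrt (∑ l, (Abar l j + τ))))^2
      ≤ ∑ i ∈ I, ∑ j ∈ J, (2 * ((d/n) * Abar i j) / ((n*τ) * D j) + 2/(n:ℝ)^2) :=
        Finset.sum_le_sum fun i hi => Finset.sum_le_sum fun j hj => point i hi j hj
    _ = (∑ i ∈ I, ∑ j ∈ J, 2 * ((d/n) * Abar i j) / ((n*τ) * D j))
        + (I.card : ℝ) * J.card * (2/(n:ℝ)^2) := split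
    _ ≤ 2/(n*τ) + 2/d := add_le_add piece1 piece2


lemma sqrt_add_le' (a b : ℝ) (ha : 0 ≤ a) (hb : 0 ≤ b) :
    Real.sqrt (a + b) ≤ Real.sqrt a + Real.sqrt b := by
  have h : a + b ≤ (Real.sqrt a + Real.sqrt b)^2 := by
    nlinarith [Real.sq_sqrt ha, Real.sq_sqrt hb, Real.sqrt_nonneg a, Real.sqrt_nonneg b]
  calc Real.sqrt (a + b) ≤ Real.sqrt ((Real.sqrt a + Real.sqrt b)^2) := Real.sqrt_le_sqrt h
    _ = Real.sqrt a + Real.sqrt b := Real.sqrt_sq (by positivity)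

lemma sum_subtype_eq {α : Type*} [Fintype α] [DecidableEq α] (I J : Finset α) (F : α → α → ℝ) :
    ∑ i : ↥I, ∑ j : ↥J, F i.1 j.1 = ∑ i ∈ I, ∑ j ∈ J, F i j := by
  rw [← Finset.sum_coe_sort I (fun i => ∑ j ∈ J, F i j)]
  exact Finset.sum_congr rfl fun i _ => Finset.sum_coe_sort J (fun j => F i.1 j)

/-- The regularized Laplacian of the expected matrix on the residual (Lemma 8.2). -/
theorem stmt19 (n : ℕ) (Abar : Matrix (Fin n) (Fin n) ℝ) (d : ℝ)
    (hsym : ∀ i j, Abar i j = Abar j i)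
    (hrange : ∀ i j, 0 ≤ Abar i j ∧ Abar i j ≤ 1)
    (hd : Real.exp 1 ≤ d)
    (hmax : ∀ i j, (n : ℝ) * Abar i j ≤ d) :
    ∀ τ : ℝ, 0 < τ → ∀ I J : Finset (Fin n),
      min (I.card : ℝ) (J.card : ℝ) ≤ n / d →
      opNorm (submatrixSet (avgOp (reg Abar τ)) I J) ≤
        2 / Real.sqrt d + 2 / Real.sqrt (n * τ) := by
  intro τ hτ I J hmin
  have hd0 : 0 < d := lt_of_lt_of_le (Real.exp_pos 1) hd
  rcases Nat.eq_zero_or_pos n with h0 | hnpos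
  · subst h0
    refine le_trans (opNorm_le_sqrt_sum_sq _) ?_
    rw [Finset.univ_eq_empty, Finset.sum_empty, Real.sqrt_zero]
    positivity
  · have hn' : 0 < (n:ℝ) := by exact_mod_cast hnpos
    refine le_trans (opNorm_le_sqrt_sum_sq _) ?_
    have hsum : ∑ i : ↥I, ∑ j : ↥J, (submatrixSet (avgOp (reg Abar τ)) I J i j)^2
        = ∑ i ∈ I, ∑ j ∈ J, ((Abar i j + τ) /
            (Real.sqrt (∑ l, (Abar i l + τ)) * Real.sqrt (∑ l, (Abar l j + τ))))^2 := by
      exact sum_subtype_eq I J (fun i j => ((Abar i j + τ) /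
        (Real.sqrt (∑ l, (Abar i l + τ)) * Real.sqrt (∑ l, (Abar l j + τ))))^2)
    rw [hsum]
    have h0' : ∀ i j, 0 ≤ Abar i j := fun i j => (hrange i j).1
    have hsymsum : ∀ i, (∑ l, (Abar i l + τ)) = ∑ l, (Abar l i + τ) :=
      fun i => Finset.sum_congr rfl fun l _ => by rw [hsym]
    have hS : ∑ i ∈ I, ∑ j ∈ J, ((Abar i j + τ) /
        (Real.sqrt (∑ l, (Abar i l + τ)) * Real.sqrt (∑ l, (Abar l j + τ))))^2
        ≤ 2/(n*τ) + 2/d := by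
      rcases le_total (I.card : ℝ) (J.card : ℝ) with hc | hc
      · have hI : (I.card : ℝ) ≤ n / d := by rwa [min_eq_left hc] at hmin
        have hswap : ∑ i ∈ I, ∑ j ∈ J, ((Abar i j + τ) /
            (Real.sqrt (∑ l, (Abar i l + τ)) * Real.sqrt (∑ l, (Abar l j + τ))))^2
            = ∑ i ∈ J, ∑ j ∈ I, ((Abar i j + τ) /
            (Real.sqrt (∑ l, (Abar i l + τ)) * Real.sqrt (∑ l, (Abar l j + τ))))^2 := by
          rw [Finset.sum_comm]
          refine Finset.sum_congr rfl fun j _ => Finset.sum_congr rfl fun i _ => ?_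
          rw [hsym i j, hsymsum i, hsymsum j, mul_comm]
        rw [hswap]
        exact key_sum hn' Abar d τ hd0 hτ h0' hmax hsym J I hI
      · have hJ : (J.card : ℝ) ≤ n / d := by rwa [min_eq_right hc] at hmin
        exact key_sum hn' Abar d τ hd0 hτ h0' hmax hsym I J hJ
    have hsqrt2 : Real.sqrt 2 ≤ 2 := by
      nlinarith [Real.sq_sqrt (by norm_num : (0:ℝ) ≤ 2), Real.sqrt_nonneg 2]
    have hnτ : 0 < (n:ℝ) * τ := by positivity
    have hs1 : 0 < Real.sqrt ((n:ℝ)*τ) := Real.sqrt_pos.mpr hnτ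
    have hs2 : 0 < Real.sqrt d := Real.sqrt_pos.mpr hd0
    calc Real.sqrt (∑ i ∈ I, ∑ j ∈ J, ((Abar i j + τ) /
          (Real.sqrt (∑ l, (Abar i l + τ)) * Real.sqrt (∑ l, (Abar l j + τ))))^2)
        ≤ Real.sqrt (2/(n*τ) + 2/d) := Real.sqrt_le_sqrt hS
      _ ≤ Real.sqrt (2/(n*τ)) + Real.sqrt (2/d) :=
          sqrt_add_le' _ _ (by positivity) (by positivity)
      _ = Real.sqrt 2 / Real.sqrt (n*τ) + Real.sqrt 2 / Real.sqrt d := by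
          rw [Real.sqrt_div (by norm_num), Real.sqrt_div (by norm_num)]
      _ ≤ 2 / Real.sqrt (n*τ) + 2 / Real.sqrt d := by
          gcongr
      _ = 2 / Real.sqrt d + 2 / Real.sqrt (n*τ) := add_comm _ _
end
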